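/- Let 0 ≤ a_D ≤ a_I < 1, D = {z ∈ ℂ : |z| ≤ a_D}, I = [-a_I, a_I]. Then there exists a polynomial p of degree at most k with p(1) = 1 such that max_{z ∈ D ∪ I} |p(z)| ≤ 2·((κ_I-1)/(κ_I+1))^η · ((√κ_I - 1)/(√κ_I + 1))^ξ, where κ_I = (1+a_I)/(1-a_I), η = ⌈k·c₀/(δ+c₀)⌉, ξ = ⌊k·δ/(δ+c₀)⌋, δ = 1 - a_D/a_I, and c₀ = log(1+√2). -/

import Mathlib

set_option maxHeartbeats 1000000
open Polynomial Polynomial.Chebyshev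

lemma deg2X : (2 * X : ℂ[X]).degree ≤ 1 := by
  refine le_trans (degree_mul_le _ _) ?_
  rw [show (2:ℂ[X]) = Polynomial.C 2 from (map_ofNat Polynomial.C 2).symm, degree_C (by norm_num), degree_X]
  norm_num

lemma cheb_degree_le (n : ℕ) : (T ℂ n).degree ≤ n := by
  induction n using Nat.twoStepInduction with
  | zero => simp [T_zero]
  | one => simp [T_one]
  | more n ih1 ih2 =>
    rw [show ((n + 2 : ℕ) : ℤ) = (n : ℤ) + 2 by push_cast; ring, T_add_two]
    rw [show ((n+1:ℕ):ℤ) = (n:ℤ)+1 by push_cast; ring] at ih2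
    refine le_trans (degree_sub_le _ _) (max_le ?_ (le_trans ih1 ?_))
    · refine le_trans (degree_mul_le _ _) ?_
      refine le_trans (add_le_add deg2X ih2) ?_
      rw [show ((n+2:ℕ) : WithBot ℕ) = 1 + ((n+1:ℕ) : WithBot ℕ) by push_cast; ring]
    · exact_mod_cast WithBot.coe_le_coe.mpr (by omega)

lemma cheb_disk_bound (n : ℕ) (z : ℂ) (hz : ‖z‖ ≤ 1) :
    ‖(T ℂ n).eval z‖ ≤ (1 + Real.sqrt 2) ^ n := by
  have hs : Real.sqrt 2 ^ 2 = 2 := Real.sq_sqrt (by norm_num)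
  have hs0 : 0 ≤ Real.sqrt 2 := Real.sqrt_nonneg 2
  induction n using Nat.twoStepInduction with
  | zero => simp [T_zero]
  | one => simpa [T_one] using le_trans hz (by nlinarith)
  | more n ih1 ih2 =>
    rw [show ((n + 2 : ℕ) : ℤ) = (n : ℤ) + 2 by push_cast; ring, T_add_two]
    rw [show ((n+1:ℕ):ℤ) = (n:ℤ)+1 by push_cast; ring] at ih2
    simp only [eval_sub, eval_mul, eval_ofNat, eval_X]
    have h1 : ‖2 * z * (T ℂ ((n:ℤ)+1)).eval z‖ ≤ 2 * (1 + Real.sqrt 2)^(n+1) := by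
      rw [norm_mul, norm_mul]
      have h2 : ‖(2:ℂ)‖ = 2 := by simp
      rw [h2]
      have := mul_le_mul hz ih2 (norm_nonneg _) zero_le_one
      nlinarith [norm_nonneg ((T ℂ ((n:ℤ)+1)).eval z),
        pow_nonneg (by nlinarith : (0:ℝ) ≤ 1 + Real.sqrt 2) (n+1)]
    refine le_trans (le_trans (norm_sub_le _ _) (add_le_add h1 ih1)) ?_
    have hp : (0:ℝ) ≤ (1 + Real.sqrt 2)^n := pow_nonneg (by nlinarith) n
    have e1 : (1 + Real.sqrt 2)^(n+1) = (1 + Real.sqrt 2)^n * (1 + Real.sqrt 2) := pow_succ _ _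
    have e2 : (1 + Real.sqrt 2)^(n+2) = (1 + Real.sqrt 2)^n * (1 + Real.sqrt 2)^2 := by ring
    nlinarith

lemma cheb_val_formula (n : ℕ) (u : ℝ) (hu : 0 < u) :
    (T ℝ n).eval ((u + u⁻¹)/2) = (u^n + u⁻¹^n)/2 := by
  have hne : u ≠ 0 := ne_of_gt hu
  induction n using Nat.twoStepInduction with
  | zero => simp [T_zero]
  | one => simp [T_one]
  | more n ih1 ih2 =>
    rw [show ((n + 2 : ℕ) : ℤ) = (n : ℤ) + 2 by push_cast; ring, T_add_two]
    rw [show ((n+1:ℕ):ℤ) = (n:ℤ)+1 by push_cast; ring] at ih2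
    simp only [eval_sub, eval_mul, eval_ofNat, eval_X, ih1, ih2]
    simp only [inv_pow]
    field_simp
    ring

lemma cheb_interval_bound (n : ℕ) (x : ℝ) (hx : |x| ≤ 1) :
    |(T ℝ n).eval x| ≤ 1 := by
  rw [show x = Real.cos (Real.arccos x) from
    (Real.cos_arccos (abs_le.mp hx).1 (abs_le.mp hx).2).symm, T_real_cos]
  exact Real.abs_cos_le_one _


lemma aux_A1 (aI : ℝ) (h2 : aI < 1) (h3 : 0 < aI) :
    ((1 + aI) / (1 - aI) - 1) / ((1 + aI) / (1 - aI) + 1) = aI := by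
  have h1a : (0:ℝ) < 1 - aI := by linarith
  field_simp; ring

lemma aux_r (aI : ℝ) (h2 : aI < 1) (h3 : 0 < aI) :
    (Real.sqrt ((1+aI)/(1-aI)) - 1)/(Real.sqrt ((1+aI)/(1-aI)) + 1)
      = aI / (1 + Real.sqrt (1+aI) * Real.sqrt (1-aI)) := by
  have h1a : (0:ℝ) < 1 - aI := by linarith
  set P := Real.sqrt (1+aI) with hPdef
  set Q := Real.sqrt (1-aI) with hQdef
  have hP : P^2 = 1+aI := Real.sq_sqrt (by linarith)
  have hQ : Q^2 = 1-aI := Real.sq_sqrt (by linarith)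
  have hP0 : 0 < P := Real.sqrt_pos.mpr (by linarith)
  have hQ0 : 0 < Q := Real.sqrt_pos.mpr h1a
  have hsq : Real.sqrt ((1+aI)/(1-aI)) = P/Q := Real.sqrt_div (by linarith) _
  rw [hsq]
  have hden : P/Q + 1 > 0 := by positivity
  have hden2 : 1 + P*Q > 0 := by positivity
  rw [div_eq_div_iff (ne_of_gt hden) (ne_of_gt hden2)]
  field_simp
  nlinarith [hP, hQ, hP0.le, hQ0.le]

lemma aux_s (aI : ℝ) (h2 : aI < 1) (h3 : 0 < aI) :
    Real.sqrt ((1/aI)^2 - 1) = Real.sqrt (1+aI) * Real.sqrt (1-aI) / aI := by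
  have h1a : (0:ℝ) < 1 - aI := by linarith
  have he : (1/aI)^2 - 1 = ((1+aI)*(1-aI))/aI^2 := by field_simp; ring
  rw [he, Real.sqrt_div (by positivity), Real.sqrt_mul (by linarith), Real.sqrt_sq h3.le]

lemma aux_uinv (x : ℝ) (hx : 1 ≤ x) :
    (x + Real.sqrt (x^2-1))⁻¹ = x - Real.sqrt (x^2-1) := by
  have hs2 : Real.sqrt (x^2-1) ^ 2 = x^2-1 := Real.sq_sqrt (by nlinarith)
  exact inv_eq_of_mul_eq_one_right (by nlinarith)

lemma aux_u (x : ℝ) (hx : 1 ≤ x) :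
    ((x + Real.sqrt (x^2-1)) + (x + Real.sqrt (x^2-1))⁻¹)/2 = x := by
  rw [aux_uinv x hx]; ring


lemma aux_log_lb (aD aI : ℝ) (haD : 0 < aD) (h3 : 0 < aI) :
    1 - aD/aI ≤ Real.log (aI/aD) := by
  have h5 : Real.log (aD/aI) ≤ aD/aI - 1 := Real.log_le_sub_one_of_pos (by positivity)
  have h6 : Real.log (aI/aD) = - Real.log (aD/aI) := by rw [← Real.log_inv, inv_div]
  linarith

lemma aux_aDkey (aD aI : ℝ) (η ξ : ℕ) (haD : 0 < aD) (h3 : 0 < aI)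
    (hlog : (ξ:ℝ) * Real.log (1+Real.sqrt 2) ≤ (η:ℝ) * Real.log (aI/aD)) :
    aD^η * (1+Real.sqrt 2)^ξ ≤ aI^η := by
  have hs0 : 0 < Real.sqrt 2 := Real.sqrt_pos.mpr (by norm_num)
  have hlhs_pos : 0 < aD ^ η * (1 + Real.sqrt 2) ^ ξ := by positivity
  rw [← Real.log_le_log_iff hlhs_pos (by positivity)]
  rw [Real.log_mul (by positivity) (by positivity), Real.log_pow, Real.log_pow, Real.log_pow]
  have hlogdiv : Real.log (aI/aD) = Real.log aI - Real.log aD :=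
    Real.log_div (ne_of_gt h3) (ne_of_gt haD)
  rw [hlogdiv] at hlog
  linarith [hlog]

theorem disk_interval_approx (aD aI : ℝ) (k : ℕ)
    (h0 : 0 ≤ aD) (h1 : aD ≤ aI) (h2 : aI < 1) (h3 : 0 < aI) :
    ∃ p : Polynomial ℂ, p.degree ≤ k ∧ p.eval 1 = 1 ∧
      ∀ z : ℂ, (‖z‖ ≤ aD ∨ (z.im = 0 ∧ |z.re| ≤ aI)) →
        ‖p.eval z‖ ≤
          2 * (((1 + aI) / (1 - aI) - 1) / ((1 + aI) / (1 - aI) + 1)) ^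
              (⌈(k : ℝ) * Real.log (1 + Real.sqrt 2) /
                ((1 - aD / aI) + Real.log (1 + Real.sqrt 2))⌉₊) *
            ((Real.sqrt ((1 + aI) / (1 - aI)) - 1) /
              (Real.sqrt ((1 + aI) / (1 - aI)) + 1)) ^
              (⌊(k : ℝ) * (1 - aD / aI) /
                ((1 - aD / aI) + Real.log (1 + Real.sqrt 2))⌋₊) := by
  have h1a : (0:ℝ) < 1 - aI := by linarith
  have hsqrt2 : Real.sqrt 2 ^ 2 = 2 := Real.sq_sqrt (by norm_num)
  have hsqrt2_0 : 0 < Real.sqrt 2 := Real.sqrt_pos.mpr (by norm_num)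
  set c₀ := Real.log (1 + Real.sqrt 2) with hc₀def
  have hc₀ : 0 < c₀ := Real.log_pos (by linarith)
  set δ := 1 - aD / aI with hδdef
  have hδ0 : 0 ≤ δ := by
    have : aD / aI ≤ 1 := (div_le_one h3).mpr h1
    simp [hδdef]; linarith
  have hd : 0 < δ + c₀ := by linarith
  set η := ⌈(k : ℝ) * c₀ / (δ + c₀)⌉₊ with hηdef
  set ξ := ⌊(k : ℝ) * δ / (δ + c₀)⌋₊ with hξdef
  -- κ simplifications
  have hA1 := aux_A1 aI h2 h3
  rw [hA1]
  -- r = (√κ - 1)/(√κ + 1)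
  set P := Real.sqrt (1+aI) with hPdef
  set Q := Real.sqrt (1-aI) with hQdef
  have hP : P^2 = 1+aI := Real.sq_sqrt (by linarith)
  have hQ : Q^2 = 1-aI := Real.sq_sqrt (by linarith)
  have hP0 : 0 < P := Real.sqrt_pos.mpr (by linarith)
  have hQ0 : 0 < Q := Real.sqrt_pos.mpr h1a
  have hr_eq : (Real.sqrt ((1+aI)/(1-aI)) - 1)/(Real.sqrt ((1+aI)/(1-aI)) + 1)
      = aI / (1 + P * Q) := aux_r aI h2 h3
  set r := (Real.sqrt ((1+aI)/(1-aI)) - 1)/(Real.sqrt ((1+aI)/(1-aI)) + 1) with hrdef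
  have hPQ1 : 0 < 1 + P * Q := by positivity
  have hr_pos : 0 < r := by rw [hr_eq]; positivity
  -- x and u
  set x : ℝ := 1/aI with hxdef
  have hx1 : 1 ≤ x := by rw [hxdef, le_div_iff₀ h3]; linarith
  set s := Real.sqrt (x^2-1) with hsdef
  have hs0 : 0 ≤ s := Real.sqrt_nonneg _
  set u := x + s with hudef
  have hu0 : 0 < u := by simp only [hudef]; linarith
  have hxu : (u + u⁻¹)/2 = x := aux_u x hx1
  -- s in terms of P, Q
  have hs_eq : s = P * Q / aI := by
    rw [hsdef, hxdef]; exact aux_s aI h2 h3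
  have hu_eq : u = (1 + P*Q)/aI := by
    simp only [hudef, hs_eq, hxdef]; field_simp
  have hru : r = u⁻¹ := by
    rw [hr_eq, hu_eq, inv_div]
  -- Chebyshev value at x
  have hTval : (T ℝ ξ).eval x = (u^ξ + u⁻¹^ξ)/2 := by
    rw [← hxu]; exact cheb_val_formula ξ u hu0
  have huinv0 : 0 < u⁻¹ := inv_pos.mpr hu0
  have hT_lb : u^ξ/2 ≤ (T ℝ ξ).eval x := by
    rw [hTval]
    have : 0 < u⁻¹^ξ := pow_pos huinv0 ξ
    linarith
  have hT_pos : 0 < (T ℝ ξ).eval x := lt_of_lt_of_le (by positivity) hT_lb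
  set c : ℝ := ((T ℝ ξ).eval x)⁻¹ with hcdef
  have hc_pos : 0 < c := inv_pos.mpr hT_pos
  have hc_le : c ≤ 2 * r^ξ := by
    rw [hru, hcdef]
    have h4 : (u^ξ/2)⁻¹ = 2 * (u⁻¹)^ξ := by
      rw [inv_div, inv_pow]; ring
    calc ((T ℝ ξ).eval x)⁻¹ ≤ (u^ξ/2)⁻¹ := by
          apply inv_anti₀ (by positivity) hT_lb
      _ = 2 * (u⁻¹)^ξ := h4
  -- the polynomial
  refine ⟨Polynomial.C (c:ℂ) * (Polynomial.X ^ η *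
    (T ℂ ξ).comp (Polynomial.C (Complex.ofReal aI⁻¹) * Polynomial.X)), ?_, ?_, ?_⟩
  · -- degree
    have hcomp : ((T ℂ ξ).comp (Polynomial.C (Complex.ofReal aI⁻¹) * Polynomial.X)).degree ≤ ξ := by
      have hnd : ((T ℂ ξ).comp (Polynomial.C (Complex.ofReal aI⁻¹) * Polynomial.X)).natDegree ≤ ξ := by
        refine le_trans natDegree_comp_le ?_
        have hT : (T ℂ ξ).natDegree ≤ ξ := natDegree_le_iff_degree_le.mpr (cheb_degree_le ξ)
        have hq : (Polynomial.C (Complex.ofReal aI⁻¹) * Polynomial.X).natDegree ≤ 1 := by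
          refine le_trans (natDegree_mul_le) ?_
          simp
        calc (T ℂ ξ).natDegree * (Polynomial.C (Complex.ofReal aI⁻¹) * Polynomial.X).natDegree
            ≤ ξ * 1 := Nat.mul_le_mul hT hq
          _ = ξ := by ring
      exact le_trans degree_le_natDegree (by exact_mod_cast hnd)
    have hηξk : η + ξ ≤ k := by
      have hξk : ξ ≤ k := by
        have : (k:ℝ) * δ / (δ + c₀) ≤ (k:ℝ) := by
          rw [div_le_iff₀ hd]
          exact mul_le_mul_of_nonneg_left (by linarith) (Nat.cast_nonneg k)
        calc ξ ≤ ⌊(k:ℝ)⌋₊ := Nat.floor_le_floor this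
          _ = k := Nat.floor_natCast k
      have hη : η ≤ k - ξ := by
        rw [hηdef, Nat.ceil_le, Nat.cast_sub hξk]
        have hfl : (ξ:ℝ) ≤ (k:ℝ) * δ / (δ + c₀) := Nat.floor_le (by positivity)
        have hsum : (k:ℝ) * c₀ / (δ + c₀) + (k:ℝ) * δ / (δ + c₀) = k := by
          field_simp; ring
        linarith
      omega
    refine le_trans (degree_mul_le _ _) ?_
    refine le_trans (add_le_add degree_C_le (le_trans (degree_mul_le _ _)
      (add_le_add (degree_X_pow η).le hcomp))) ?_
    rw [zero_add]
    calc ((η:WithBot ℕ) + (ξ:WithBot ℕ)) = ((η + ξ : ℕ) : WithBot ℕ) := by push_cast; ring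
      _ ≤ (k : WithBot ℕ) := by exact_mod_cast WithBot.coe_le_coe.mpr hηξk
  · -- eval at 1
    have hcast : ∀ y : ℝ, (T ℂ ξ).eval ((y:ℝ):ℂ) = (((T ℝ ξ).eval y : ℝ) : ℂ) := by
      intro y
      rw [← map_T Complex.ofRealHom (ξ:ℤ), eval_map]
      exact eval₂_at_apply Complex.ofRealHom y
    simp only [eval_mul, eval_pow, eval_C, eval_X, eval_comp, one_pow, mul_one]
    rw [hcast aI⁻¹]
    rw [show (aI:ℝ)⁻¹ = x by rw [hxdef, one_div]]
    rw [one_mul, ← Complex.ofReal_mul, hcdef, inv_mul_cancel₀ (ne_of_gt hT_pos)]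
    simp
  · -- the bound
    intro z hz
    have hcast : ∀ y : ℝ, (T ℂ ξ).eval ((y:ℝ):ℂ) = (((T ℝ ξ).eval y : ℝ) : ℂ) := by
      intro y
      rw [← map_T Complex.ofRealHom (ξ:ℤ), eval_map]
      exact eval₂_at_apply Complex.ofRealHom y
    simp only [eval_mul, eval_pow, eval_C, eval_X, eval_comp, norm_mul, norm_pow,
      Complex.norm_real, Real.norm_eq_abs, abs_of_pos hc_pos]
    set w : ℂ := (Complex.ofReal aI⁻¹) * z with hwdef
    have haIpow : (0:ℝ) ≤ aI ^ η := by positivity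
    have hrξ : (0:ℝ) ≤ r ^ ξ := by positivity
    have key : ∀ b : ℝ, 0 ≤ b → ‖z‖ ^ η * ‖(T ℂ ξ).eval w‖ ≤ b →
        b * c ≤ 2 * aI ^ η * r ^ ξ →
        c * (‖z‖ ^ η * ‖(T ℂ ξ).eval w‖) ≤ 2 * aI ^ η * r ^ ξ := by
      intro b hb hble hbc
      calc c * (‖z‖ ^ η * ‖(T ℂ ξ).eval w‖) ≤ c * b := by
            exact mul_le_mul_of_nonneg_left hble hc_pos.le
        _ = b * c := by ring
        _ ≤ 2 * aI ^ η * r ^ ξ := hbc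
    rcases hz with hzD | ⟨him, hre⟩
    · -- disk case
      have hzabs : ‖z‖ ≤ aD := hzD
      have hw : ‖w‖ ≤ 1 := by
        rw [hwdef, norm_mul]
        have : ‖Complex.ofReal aI⁻¹‖ = aI⁻¹ := by
          rw [Complex.norm_real, Real.norm_eq_abs, abs_of_pos (inv_pos.mpr h3)]
        rw [this]
        calc aI⁻¹ * ‖z‖ ≤ aI⁻¹ * aI := by
              exact mul_le_mul_of_nonneg_left (le_trans hzabs h1) (inv_pos.mpr h3).le
          _ = 1 := inv_mul_cancel₀ (ne_of_gt h3)
      have hTw := cheb_disk_bound ξ w hw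
      have haDkey : aD ^ η * (1 + Real.sqrt 2) ^ ξ ≤ aI ^ η := by
        rcases eq_or_lt_of_le h0 with haD | haD
        · -- aD = 0
          rcases Nat.eq_zero_or_pos η with hη0 | hηp
          · have hk0 : k = 0 := by
              rw [hηdef] at hη0
              rw [Nat.ceil_eq_zero] at hη0
              by_contra hk
              have hkpos : 0 < (k:ℝ) := by
                exact_mod_cast Nat.pos_of_ne_zero hk
              have : 0 < (k:ℝ) * c₀ / (δ + c₀) := by positivity
              linarith
            have hξ0 : ξ = 0 := by
              rw [hξdef, hk0]
              simp
            rw [hη0, hξ0]; simp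
          · rw [← haD, zero_pow (Nat.pos_iff_ne_zero.mp hηp)]
            rw [zero_mul]
            positivity
        · -- aD > 0
          have hlog1 : δ ≤ Real.log (aI/aD) := by
            rw [hδdef]; exact aux_log_lb aD aI haD h3
          have hlog : (ξ:ℝ) * c₀ ≤ (η:ℝ) * Real.log (aI/aD) := by
            have hfl : (ξ:ℝ) ≤ (k:ℝ) * δ / (δ + c₀) := Nat.floor_le (by positivity)
            have hce : (k:ℝ) * c₀ / (δ + c₀) ≤ (η:ℝ) := Nat.le_ceil _
            calc (ξ:ℝ) * c₀ ≤ ((k:ℝ) * δ / (δ + c₀)) * c₀ :=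
                  mul_le_mul_of_nonneg_right hfl hc₀.le
              _ = ((k:ℝ) * c₀ / (δ + c₀)) * δ := by ring
              _ ≤ (η:ℝ) * δ := mul_le_mul_of_nonneg_right hce hδ0
              _ ≤ (η:ℝ) * Real.log (aI/aD) :=
                  mul_le_mul_of_nonneg_left hlog1 (Nat.cast_nonneg _)
          rw [hc₀def] at hlog
          exact aux_aDkey aD aI η ξ haD h3 hlog
      refine key (aD ^ η * (1 + Real.sqrt 2) ^ ξ) (by positivity) ?_ ?_
      · have hz1 : ‖z‖ ^ η ≤ aD ^ η :=
          pow_le_pow_left₀ (norm_nonneg z) hzabs η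
        exact mul_le_mul hz1 hTw (norm_nonneg _) (by positivity)
      · calc aD ^ η * (1 + Real.sqrt 2) ^ ξ * c ≤ aI ^ η * c :=
              mul_le_mul_of_nonneg_right haDkey hc_pos.le
          _ ≤ aI ^ η * (2 * r ^ ξ) := mul_le_mul_of_nonneg_left hc_le haIpow
          _ = 2 * aI ^ η * r ^ ξ := by ring
    · -- interval case
      have hzre : z = ((z.re : ℝ) : ℂ) := by
        apply Complex.ext <;> simp [him]
      have hwre : w = (((aI⁻¹ * z.re : ℝ)) : ℂ) := by
        rw [hwdef]; nth_rewrite 1 [hzre]; push_cast; ring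
      have habs_w : ‖(T ℂ ξ).eval w‖ ≤ 1 := by
        rw [hwre, hcast, Complex.norm_real, Real.norm_eq_abs]
        apply cheb_interval_bound
        rw [abs_mul, abs_of_pos (inv_pos.mpr h3)]
        calc aI⁻¹ * |z.re| ≤ aI⁻¹ * aI :=
              mul_le_mul_of_nonneg_left hre (inv_pos.mpr h3).le
          _ = 1 := inv_mul_cancel₀ (ne_of_gt h3)
      have hzabs : ‖z‖ ≤ aI := by
        rw [hzre, Complex.norm_real, Real.norm_eq_abs]; exact hre
      refine key (aI ^ η) haIpow ?_ ?_
      · calc ‖z‖ ^ η * ‖(T ℂ ξ).eval w‖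
            ≤ aI ^ η * 1 := mul_le_mul (pow_le_pow_left₀ (norm_nonneg z) hzabs η)
              habs_w (norm_nonneg _) haIpow
          _ = aI ^ η := mul_one _
      · calc aI ^ η * c ≤ aI ^ η * (2 * r ^ ξ) := mul_le_mul_of_nonneg_left hc_le haIpow
          _ = 2 * aI ^ η * r ^ ξ := by ring
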